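/- Let G be a connected graph, not a 4-cycle, with 2-cuts with the same neighbours S_1,…,S_q. For any β ⊆ 𝒯_G := ⊔_i T_{S_i}, the composition ψ_β := φ_{S_1,β_1} ∘ ⋯ ∘ φ_{S_q,β_q}, where β_i := β ∩ T_{S_i}, is an automorphism of F_k(G); moreover the factors pairwise commute: φ_{S_i,β_i} ∘ φ_{S_j,β_j} = φ_{S_j,β_j} ∘ φ_{S_i,β_i} for all i, j. -/

import Mathlib

open scoped Classical symmDiff

variable {V : Type*}

/-- The `k`-token graph of `G`: vertices are the `k`-subsets of `V(G)`,
two being adjacent iff their symmetric difference is an edge of `G`. -/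
def tokenGraph [DecidableEq V] (G : SimpleGraph V) (k : ℕ) :
    SimpleGraph {A : Finset V // A.card = k} where
  Adj A B := ∃ a b : V, G.Adj a b ∧ (A.1 ∆ B.1) = {a, b}
  symm := by
    constructor
    rintro A B ⟨a, b, hab, h⟩
    exact ⟨a, b, hab, by rwa [symmDiff_comm]⟩
  loopless := by
    constructor
    rintro A ⟨a, b, hab, h⟩
    rw [symmDiff_self] at h
    exact (Finset.insert_ne_empty a {b}) h.symm

/-- `S` is a 2-cut with the same neighbours: a 2-element vertex set whose removal
disconnects `G` and whose two vertices have the same neighbours outside `S`. -/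
def SameNbrCut (G : SimpleGraph V) (S : Finset V) : Prop :=
  S.card = 2 ∧ ¬ (G.induce ((↑S : Set V)ᶜ)).Preconnected ∧
    ∀ x ∈ S, ∀ y ∈ S, ∀ v ∉ S, (G.Adj x v ↔ G.Adj y v)

/-- `A^S = (A \ S) ∪ (S \ A)`. -/
def tokenMove [DecidableEq V] (A S : Finset V) : Finset V := (A \ S) ∪ (S \ A)

/-- The connected components of `G \ S`. -/
abbrev delComp (G : SimpleGraph V) (S : Finset V) :=
  (G.induce ((↑S : Set V)ᶜ)).ConnectedComponent

/-- The distribution tuple of `A` over the components of `G \ S`. -/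
noncomputable def compDist (G : SimpleGraph V) (S : Finset V) (A : Finset V)
    (c : delComp G S) : ℕ :=
  {v : ((↑S : Set V)ᶜ : Set V) | (v : V) ∈ A ∧
    (G.induce ((↑S : Set V)ᶜ)).connectedComponentMk v = c}.ncard

/-- `T_S`: distribution tuples with `kᵢ ≤ nᵢ` summing to `k - 1`. -/
def TS (G : SimpleGraph V) (S : Finset V) (k : ℕ) : Set (delComp G S → ℕ) :=
  {t | (∀ c, t c ≤ c.supp.ncard) ∧ ∑ᶠ c, t c = k - 1}

/-- The map `φ_{S,α}` on `k`-subsets. -/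
noncomputable def phiFun [DecidableEq V] (G : SimpleGraph V) (S : Finset V)
    (α : Set (delComp G S → ℕ)) (A : Finset V) : Finset V :=
  if compDist G S A ∈ α then tokenMove A S else A

/-- The map `ψ_β`, the composition of the `φ_{Sᵢ,βᵢ}`. -/
noncomputable def psiFun [DecidableEq V] (G : SimpleGraph V) {q : ℕ}
    (S : Fin q → Finset V) (β : ∀ i, Set (delComp G (S i) → ℕ)) :
    Finset V → Finset V :=
  (List.ofFn (fun i => phiFun G (S i) (β i))).foldr (· ∘ ·) id

section Aux

open Finset SimpleGraph

variable [DecidableEq V] {G : SimpleGraph V} {S T A B : Finset V} {k : ℕ}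

lemma tokenMove_eq (A S : Finset V) : tokenMove A S = A ∆ S := by
  rw [symmDiff_def, Finset.sup_eq_union]; rfl

lemma compDist_congr (h : ∀ v ∉ S, (v ∈ A ↔ v ∈ B)) : compDist G S A = compDist G S B := by
  funext c
  unfold compDist
  congr 1
  ext v
  have hv : (v : V) ∉ S := v.2
  simp only [Set.mem_setOf_eq, h (v : V) hv]

lemma compDist_symmDiff : compDist G S (A ∆ S) = compDist G S A :=
  compDist_congr (by intro v hv; simp [Finset.mem_symmDiff, hv])

lemma compDist_sum [Fintype V] (G : SimpleGraph V) (S A : Finset V) :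
    ∑ᶠ c, compDist G S A c = (A \ S).card := by
  classical
  haveI : Finite (delComp G S) := Quot.finite _
  haveI : Fintype (delComp G S) := Fintype.ofFinite _
  rw [finsum_eq_sum_of_fintype]
  have h1 : ∀ c, compDist G S A c =
      (Finset.univ.filter (fun v : ((↑S : Set V)ᶜ : Set V) => (v : V) ∈ A ∧
        (G.induce ((↑S : Set V)ᶜ)).connectedComponentMk v = c)).card := by
    intro c
    rw [compDist, Set.ncard_eq_toFinset_card', Set.toFinset_setOf]
  simp_rw [h1]
  have h2 := Finset.card_eq_sum_card_fiberwise
    (f := fun v : ((↑S : Set V)ᶜ : Set V) => (G.induce ((↑S : Set V)ᶜ)).connectedComponentMk v)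
    (s := Finset.univ.filter (fun v : ((↑S : Set V)ᶜ : Set V) => (v : V) ∈ A))
    (t := Finset.univ) (fun x _ => Finset.mem_univ _)
  simp_rw [Finset.filter_filter] at h2
  rw [← h2]
  refine Finset.card_bij (fun (v : ((↑S : Set V)ᶜ : Set V)) _ => (v : V)) ?_ ?_ ?_
  · intro a ha
    simp only [Finset.mem_filter, Finset.mem_univ, true_and] at ha
    have ha2 : (a : V) ∉ S := a.2
    exact Finset.mem_sdiff.mpr ⟨ha, ha2⟩
  · intro a _ b _ hab
    exact Subtype.ext hab
  · intro b hb
    rw [Finset.mem_sdiff] at hb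
    exact ⟨⟨b, by simpa using hb.2⟩, by simpa using hb.1, rfl⟩

lemma inter_card_one [Fintype V] (hk : 1 ≤ k) (hA : A.card = k)
    (ht : compDist G S A ∈ TS G S k) : (A ∩ S).card = 1 := by
  have h1 : (A \ S).card = k - 1 := by rw [← compDist_sum G S A]; exact ht.2
  have h2 := Finset.card_inter_add_card_sdiff A S
  omega

lemma card_symmDiff_eq (hS : S.card = 2) (h1 : (A ∩ S).card = 1) :
    (A ∆ S).card = A.card := by
  rw [symmDiff_def, Finset.sup_eq_union, Finset.card_union_of_disjoint disjoint_sdiff_sdiff]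
  have h2 := Finset.card_inter_add_card_sdiff A S
  have h3 := Finset.card_inter_add_card_sdiff S A
  rw [Finset.inter_comm] at h3
  omega

lemma phiFun_card [Fintype V] (hS2 : S.card = 2) {α} (hα : α ⊆ TS G S k) (hk : 1 ≤ k)
    (hA : A.card = k) : (phiFun G S α A).card = k := by
  unfold phiFun
  split_ifs with h
  · rw [tokenMove_eq, card_symmDiff_eq hS2 (inter_card_one hk hA (hα h)), hA]
  · exact hA

lemma phiFun_invol {α} (A : Finset V) : phiFun G S α (phiFun G S α A) = A := by
  by_cases h : compDist G S A ∈ α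
  · simp only [phiFun, if_pos h, tokenMove_eq]
    rw [compDist_symmDiff, if_pos h, symmDiff_symmDiff_cancel_right]
  · simp only [phiFun, if_neg h]

lemma compDist_swap {w w' : V} (hw : w ∉ S) (hw' : w' ∉ S) (hww : w ≠ w')
    (hc : (G.induce ((↑S : Set V)ᶜ)).connectedComponentMk ⟨w, by simpa using hw⟩
        = (G.induce ((↑S : Set V)ᶜ)).connectedComponentMk ⟨w', by simpa using hw'⟩)
    (h1 : ∀ v, v ∉ S → v ≠ w → v ≠ w' → (v ∈ A ↔ v ∈ B))
    (h2 : w ∈ A ↔ w' ∈ B) (h3 : w' ∈ A ↔ w ∈ B) :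
    compDist G S A = compDist G S B := by
  classical
  funext c
  unfold compDist
  set e := Equiv.swap (⟨w, by simpa using hw⟩ : ((↑S : Set V)ᶜ : Set V))
    ⟨w', by simpa using hw'⟩ with he
  have key : ∀ v : ((↑S : Set V)ᶜ : Set V),
      (((v : V) ∈ A ∧ (G.induce ((↑S : Set V)ᶜ)).connectedComponentMk v = c)
        ↔ (((e v : V) ∈ B ∧ (G.induce ((↑S : Set V)ᶜ)).connectedComponentMk (e v) = c))) := by
    intro v
    by_cases hvw : v = ⟨w, by simpa using hw⟩
    · subst hvw
      rw [he, Equiv.swap_apply_left]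
      exact and_congr h2 (by rw [hc])
    · by_cases hvw' : v = ⟨w', by simpa using hw'⟩
      · subst hvw'
        rw [he, Equiv.swap_apply_right]
        exact and_congr h3 (by rw [hc])
      · rw [he, Equiv.swap_apply_of_ne_of_ne hvw hvw']
        have hv : (v : V) ∉ S := v.2
        have hvw2 : (v : V) ≠ w := fun h => hvw (Subtype.ext h)
        have hvw2' : (v : V) ≠ w' := fun h => hvw' (Subtype.ext h)
        exact and_congr (h1 (v : V) hv hvw2 hvw2') Iff.rfl
  have himg : {v : ((↑S : Set V)ᶜ : Set V) | (v : V) ∈ A ∧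
      (G.induce ((↑S : Set V)ᶜ)).connectedComponentMk v = c}
      = e ⁻¹' {v : ((↑S : Set V)ᶜ : Set V) | (v : V) ∈ B ∧
      (G.induce ((↑S : Set V)ᶜ)).connectedComponentMk v = c} := by
    ext v
    exact key v
  rw [himg, ← Set.ncard_image_of_injective _ e.injective, Equiv.image_preimage]

lemma comp_eq_of_adj {a b : V} (ha : a ∉ S) (hb : b ∉ S) (hab : G.Adj a b) :
    (G.induce ((↑S : Set V)ᶜ)).connectedComponentMk ⟨a, by simpa using ha⟩
      = (G.induce ((↑S : Set V)ᶜ)).connectedComponentMk ⟨b, by simpa using hb⟩ := by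
  apply SimpleGraph.ConnectedComponent.sound
  exact SimpleGraph.Adj.reachable (by exact hab)

lemma pair_symmDiff {x y b : V} (hxy : x ≠ y) (hxb : x ≠ b) (hyb : y ≠ b) :
    ({x, b} : Finset V) ∆ {x, y} = {y, b} := by
  ext v
  simp only [Finset.mem_symmDiff, Finset.mem_insert, Finset.mem_singleton]
  by_cases hvx : v = x <;> by_cases hvy : v = y <;> by_cases hvb : v = b <;>
    subst_vars <;> tauto

lemma symmDiff_both (A B S : Finset V) : (A ∆ S) ∆ (B ∆ S) = A ∆ B := by
  rw [symmDiff_comm B S, ← symmDiff_assoc, symmDiff_symmDiff_cancel_right]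

lemma phi_adj_eq {α} (hcd : compDist G S A = compDist G S B) {a b : V} (hab : G.Adj a b)
    (hd : A ∆ B = {a, b}) :
    ∃ a' b', G.Adj a' b' ∧ phiFun G S α A ∆ phiFun G S α B = {a', b'} := by
  refine ⟨a, b, hab, ?_⟩
  unfold phiFun
  rw [hcd]
  split_ifs with h
  · rw [tokenMove_eq, tokenMove_eq, symmDiff_both, hd]
  · exact hd

lemma cut_pair (hS2 : S.card = 2) {z : V} (hz : z ∈ S) : ∃ y, z ≠ y ∧ S = {z, y} := by
  obtain ⟨u, v, huv, rfl⟩ := Finset.card_eq_two.mp hS2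
  rcases Finset.mem_insert.mp hz with rfl | hz'
  · exact ⟨v, huv, rfl⟩
  · rw [Finset.mem_singleton] at hz'
    subst hz'
    exact ⟨u, huv.symm, Finset.pair_comm u z⟩

lemma phi_adj_core {α} (hS : SameNbrCut G S) {x b : V}
    (hxS : x ∈ S) (hbS : b ∉ S) (hab : G.Adj x b) (hd : A ∆ B = {x, b}) :
    ∃ a' b', G.Adj a' b' ∧ phiFun G S α A ∆ phiFun G S α B = {a', b'} := by
  obtain ⟨hS2, _, hSnbr⟩ := hS
  obtain ⟨y, hxy, hSxy⟩ := cut_pair hS2 hxS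
  have hyS : y ∈ S := by rw [hSxy]; simp
  have hyb : y ≠ b := fun h => hbS (h ▸ hyS)
  have hxb : x ≠ b := fun h => hbS (h ▸ hxS)
  have hadj_yb : G.Adj y b := (hSnbr x hxS y hyS b hbS).mp hab
  unfold phiFun
  by_cases hPA : compDist G S A ∈ α <;> by_cases hPB : compDist G S B ∈ α
  · refine ⟨x, b, hab, ?_⟩
    rw [if_pos hPA, if_pos hPB, tokenMove_eq, tokenMove_eq, symmDiff_both, hd]
  · refine ⟨y, b, hadj_yb, ?_⟩
    rw [if_pos hPA, if_neg hPB, tokenMove_eq, symmDiff_right_comm, hd, hSxy,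
      pair_symmDiff hxy hxb hyb]
  · refine ⟨y, b, hadj_yb, ?_⟩
    rw [if_neg hPA, if_pos hPB, tokenMove_eq, ← symmDiff_assoc, hd, hSxy,
      pair_symmDiff hxy hxb hyb]
  · exact ⟨x, b, hab, by rw [if_neg hPA, if_neg hPB, hd]⟩

lemma phi_adj {α} (hS : SameNbrCut G S) (hAB : A.card = B.card)
    (h : ∃ a b, G.Adj a b ∧ A ∆ B = {a, b}) :
    ∃ a b, G.Adj a b ∧ phiFun G S α A ∆ phiFun G S α B = {a, b} := by
  classical
  obtain ⟨a, b, hab, hd⟩ := h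
  have hne : a ≠ b := hab.ne
  by_cases haS : a ∈ S <;> by_cases hbS : b ∈ S
  · refine phi_adj_eq (compDist_congr fun v hv => ?_) hab hd
    have hva : v ≠ a := fun h => hv (h ▸ haS)
    have hvb : v ≠ b := fun h => hv (h ▸ hbS)
    have hvd : v ∉ A ∆ B := by rw [hd]; simp [hva, hvb]
    rw [Finset.mem_symmDiff] at hvd
    tauto
  · exact phi_adj_core hS haS hbS hab hd
  · exact phi_adj_core hS hbS haS hab.symm (by rw [hd, Finset.pair_comm])
  · -- both outside S
    have hcard : (A \ B).card = 1 ∧ (B \ A).card = 1 := by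
      have hu : A ∆ B = (A \ B) ∪ (B \ A) := by rw [symmDiff_def, Finset.sup_eq_union]
      have hcc : (A \ B).card + (B \ A).card = 2 := by
        rw [← Finset.card_union_of_disjoint disjoint_sdiff_sdiff, ← hu, hd,
          Finset.card_pair hne]
      have := Finset.card_sdiff_comm hAB
      omega
    have haAB : a ∈ A ∆ B := by rw [hd]; simp
    have hbAB : b ∈ A ∆ B := by rw [hd]; simp
    have horient : (a ∈ A ∧ a ∉ B ∧ b ∈ B ∧ b ∉ A) ∨ (a ∈ B ∧ a ∉ A ∧ b ∈ A ∧ b ∉ B) := by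
      rw [Finset.mem_symmDiff] at haAB hbAB
      rcases haAB with ⟨ha1, ha2⟩ | ⟨ha1, ha2⟩ <;> rcases hbAB with ⟨hb1, hb2⟩ | ⟨hb1, hb2⟩
      · exfalso
        have hsub : ({a, b} : Finset V) ⊆ A \ B := by
          intro v hv
          rcases Finset.mem_insert.mp hv with rfl | hv
          · exact Finset.mem_sdiff.mpr ⟨ha1, ha2⟩
          · rw [Finset.mem_singleton] at hv
            subst hv
            exact Finset.mem_sdiff.mpr ⟨hb1, hb2⟩
        have := Finset.card_le_card hsub
        rw [Finset.card_pair hne, hcard.1] at this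
        omega
      · exact Or.inl ⟨ha1, ha2, hb1, hb2⟩
      · exact Or.inr ⟨ha1, ha2, hb1, hb2⟩
      · exfalso
        have hsub : ({a, b} : Finset V) ⊆ B \ A := by
          intro v hv
          rcases Finset.mem_insert.mp hv with rfl | hv
          · exact Finset.mem_sdiff.mpr ⟨ha1, ha2⟩
          · rw [Finset.mem_singleton] at hv
            subst hv
            exact Finset.mem_sdiff.mpr ⟨hb1, hb2⟩
        have := Finset.card_le_card hsub
        rw [Finset.card_pair hne, hcard.2] at this
        omega
    have h1 : ∀ v, v ∉ S → v ≠ a → v ≠ b → (v ∈ A ↔ v ∈ B) := by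
      intro v _ hva hvb
      have hvd : v ∉ A ∆ B := by rw [hd]; simp [hva, hvb]
      rw [Finset.mem_symmDiff] at hvd
      tauto
    rcases horient with ⟨o1, o2, o3, o4⟩ | ⟨o1, o2, o3, o4⟩
    · exact phi_adj_eq (compDist_swap haS hbS hne (comp_eq_of_adj haS hbS hab) h1
        (by tauto) (by tauto)) hab hd
    · exact phi_adj_eq (compDist_swap hbS haS hne.symm
        (comp_eq_of_adj hbS haS hab.symm)
        (fun v hv hvb hva => h1 v hv hva hvb) (by tauto) (by tauto)) hab hd

lemma reroute {G : SimpleGraph V} (hG : G.Preconnected) (s : Set V) (v : V) (hv : v ∉ s)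
    (H : ∀ x ∈ s, ∀ a, a ∉ s → a ≠ v → G.Adj x a → G.Adj v a) :
    (G.induce sᶜ).Preconnected := by
  have hv' : v ∈ sᶜ := hv
  have key : ∀ (a b : V) (w : G.Walk a b) (hb : b ∈ sᶜ),
      (∀ ha : a ∈ sᶜ, (G.induce sᶜ).Reachable ⟨a, ha⟩ ⟨b, hb⟩) ∧
      (a ∈ s → (G.induce sᶜ).Reachable ⟨v, hv'⟩ ⟨b, hb⟩) := by
    intro a b w
    induction w with
    | nil => exact fun hb => ⟨fun ha => Reachable.refl _, fun ha => absurd ha hb⟩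
    | @cons a c b h p ih =>
      intro hb
      obtain ⟨ih1, ih2⟩ := ih hb
      constructor
      · intro ha
        by_cases hc : c ∈ s
        · by_cases hav : a = v
          · subst hav
            exact ih2 hc
          · have hadj : G.Adj v a := H c hc a ha hav h.symm
            have hstep : (G.induce sᶜ).Adj ⟨a, ha⟩ ⟨v, hv'⟩ := hadj.symm
            exact hstep.reachable.trans (ih2 hc)
        · have hstep : (G.induce sᶜ).Adj ⟨a, ha⟩ ⟨c, hc⟩ := h
          exact hstep.reachable.trans (ih1 hc)
      · intro haS
        by_cases hc : c ∈ s
        · exact ih2 hc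
        · by_cases hcv : c = v
          · subst hcv
            exact ih1 hc
          · have hadj : G.Adj v c := H a haS c hc hcv h
            have hstep : (G.induce sᶜ).Adj ⟨v, hv'⟩ ⟨c, hc⟩ := hadj
            exact hstep.reachable.trans (ih1 hc)
  rintro ⟨a, ha⟩ ⟨b, hb⟩
  obtain ⟨w⟩ := hG a b
  exact (key a b w hb).1 ha

lemma walk_closure {G : SimpleGraph V} {C : Set V}
    (hC : ∀ a ∈ C, ∀ b, G.Adj a b → b ∈ C) {a b : V} (w : G.Walk a b) :
    a ∈ C → b ∈ C := by
  induction w with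
  | nil => exact id
  | cons h p ih => exact fun ha => ih (hC _ ha _ h)

lemma cuts_disjoint (hG : G.Connected) (hS : SameNbrCut G S) (hT : SameNbrCut G T)
    (hne : S ≠ T) : ∀ z ∈ S, z ∉ T := by
  by_contra hcon
  push_neg at hcon
  obtain ⟨z, hzS, hzT⟩ := hcon
  obtain ⟨y, hzy, hSy⟩ := cut_pair hS.1 hzS
  obtain ⟨v, hzv, hTv⟩ := cut_pair hT.1 hzT
  have hyv : y ≠ v := by rintro rfl; exact hne (hSy.trans hTv.symm)
  have hvS : v ∉ S := by rw [hSy]; simp [hzv.symm, hyv.symm]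
  apply hS.2.1
  apply reroute hG.preconnected (↑S) v (by simpa using hvS)
  intro x hxS a haS hav hadj
  rw [Finset.mem_coe] at hxS
  have haS' : a ∉ S := by simpa using haS
  have h1 : G.Adj z a := by
    rw [hSy] at hxS
    rcases Finset.mem_insert.mp hxS with rfl | hxS'
    · exact hadj
    · rw [Finset.mem_singleton] at hxS'
      subst hxS'
      exact (hS.2.2 z hzS x (by rw [hSy]; simp) a haS').mpr hadj
  have haT : a ∉ T := by
    rw [hTv]
    have haz : a ≠ z := fun h => haS' (h ▸ hzS)
    simp [haz, hav]
  have hvT : v ∈ T := by rw [hTv]; simp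
  exact (hT.2.2 z hzT v hvT a haT).mp h1

lemma c4_iso {G : SimpleGraph V} {x y u v : V}
    (hxy : x ≠ y) (hxu : x ≠ u) (hxv : x ≠ v) (hyu : y ≠ u) (hyv : y ≠ v) (huv : u ≠ v)
    (hall : ∀ w : V, w = x ∨ w = y ∨ w = u ∨ w = v)
    (haxu : G.Adj x u) (haxv : G.Adj x v) (hayu : G.Adj y u) (hayv : G.Adj y v)
    (hnxy : ¬ G.Adj x y) (hnuv : ¬ G.Adj u v) :
    Nonempty (G ≃g SimpleGraph.cycleGraph 4) := by
  classical
  let f : V → Fin 4 := fun w => if w = x then 0 else if w = u then 1 else if w = y then 2 else 3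
  have fx : f x = 0 := by simp [f]
  have fu : f u = 1 := by simp [f, hxu.symm]
  have fy : f y = 2 := by simp [f, hxy.symm, hyu]
  have fv : f v = 3 := by simp [f, hxv.symm, huv.symm, hyv.symm]
  let g : Fin 4 → V := ![x, u, y, v]
  have hgf : Function.LeftInverse g f := by
    intro w
    rcases hall w with rfl | rfl | rfl | rfl
    · rw [fx]; rfl
    · rw [fy]; rfl
    · rw [fu]; rfl
    · rw [fv]; rfl
  have hfg : Function.RightInverse g f := by
    intro i
    fin_cases i
    · exact fx
    · exact fu
    · exact fy
    · exact fv
  refine ⟨⟨⟨f, g, hgf, hfg⟩, ?_⟩⟩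
  intro a b
  simp only [Equiv.coe_fn_mk]
  rcases hall a with rfl | rfl | rfl | rfl <;> rcases hall b with rfl | rfl | rfl | rfl
  · simp only [fx, fx]; exact iff_of_false (by decide) (G.loopless.irrefl _)
  · simp only [fx, fy]; exact iff_of_false (by decide) hnxy
  · simp only [fx, fu]; exact iff_of_true (by decide) haxu
  · simp only [fx, fv]; exact iff_of_true (by decide) haxv
  · simp only [fy, fx]; exact iff_of_false (by decide) (fun h => hnxy h.symm)
  · simp only [fy, fy]; exact iff_of_false (by decide) (G.loopless.irrefl _)
  · simp only [fy, fu]; exact iff_of_true (by decide) hayu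
  · simp only [fy, fv]; exact iff_of_true (by decide) hayv
  · simp only [fu, fx]; exact iff_of_true (by decide) haxu.symm
  · simp only [fu, fy]; exact iff_of_true (by decide) hayu.symm
  · simp only [fu, fu]; exact iff_of_false (by decide) (G.loopless.irrefl _)
  · simp only [fu, fv]; exact iff_of_false (by decide) hnuv
  · simp only [fv, fx]; exact iff_of_true (by decide) haxv.symm
  · simp only [fv, fy]; exact iff_of_true (by decide) hayv.symm
  · simp only [fv, fu]; exact iff_of_false (by decide) (fun h => hnuv h.symm)
  · simp only [fv, fv]; exact iff_of_false (by decide) (G.loopless.irrefl _)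

lemma cuts_same_comp (hG : G.Connected) (h4 : IsEmpty (G ≃g SimpleGraph.cycleGraph 4))
    (hS : SameNbrCut G S) (hT : SameNbrCut G T) (hne : S ≠ T)
    {u v : V} (huT : u ∈ T) (hvT : v ∈ T) (huS : u ∉ S) (hvS : v ∉ S) :
    (G.induce ((↑S : Set V)ᶜ)).connectedComponentMk ⟨u, by simpa using huS⟩
      = (G.induce ((↑S : Set V)ᶜ)).connectedComponentMk ⟨v, by simpa using hvS⟩ := by
  classical
  by_cases huv : u = v
  · subst huv; rfl
  have hdis := cuts_disjoint hG hS hT hne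
  have hTuv : T = {u, v} := by
    refine (Finset.eq_of_subset_of_card_le ?_ ?_).symm
    · intro w hw
      rcases Finset.mem_insert.mp hw with rfl | hw'
      · exact huT
      · rw [Finset.mem_singleton] at hw'
        subst hw'
        exact hvT
    · rw [hT.1, Finset.card_pair huv]
  by_contra hR
  have hreach : ¬ (G.induce ((↑S : Set V)ᶜ)).Reachable ⟨u, by simpa using huS⟩
      ⟨v, by simpa using hvS⟩ := fun h => hR (SimpleGraph.ConnectedComponent.sound h)
  have iAdj : ∀ {a b : V} (ha : a ∉ S) (hb : b ∉ S), G.Adj a b →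
      (G.induce ((↑S : Set V)ᶜ)).Adj ⟨a, by simpa using ha⟩ ⟨b, by simpa using hb⟩ :=
    fun ha hb hab => hab
  have hnadj : ¬ G.Adj u v := fun h => hreach (iAdj huS hvS h).reachable
  have hNu : ∀ w, G.Adj u w → w ∈ S := by
    intro w hw
    by_contra hwS
    have hwv : w ≠ v := by rintro rfl; exact hnadj hw
    have hwT : w ∉ T := by rw [hTuv]; simp [hw.ne', hwv]
    have hvw : G.Adj v w := (hT.2.2 u huT v hvT w hwT).mp hw
    exact hreach ((iAdj huS hwS hw).reachable.trans (iAdj hwS hvS hvw.symm).reachable)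
  have hNv : ∀ w, G.Adj v w → w ∈ S := by
    intro w hw
    by_contra hwS
    have hwu : w ≠ u := by rintro rfl; exact hnadj hw.symm
    have hwT : w ∉ T := by rw [hTuv]; simp [hw.ne', hwu]
    have huw : G.Adj u w := (hT.2.2 u huT v hvT w hwT).mpr hw
    exact hreach ((iAdj huS hwS huw).reachable.trans (iAdj hwS hvS hw.symm).reachable)
  obtain ⟨x, y, hxy, hSxy⟩ := Finset.card_eq_two.mp hS.1
  have hxS : x ∈ S := by rw [hSxy]; simp
  have hyS : y ∈ S := by rw [hSxy]; simp
  have hxT : x ∉ T := hdis x hxS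
  have hyT : y ∉ T := hdis y hyS
  have hux : u ≠ x := fun h => huS (h ▸ hxS)
  have hux_or : G.Adj u x ∨ G.Adj u y := by
    obtain ⟨w'⟩ := hG.preconnected u x
    cases w' with
    | nil => exact absurd rfl hux
    | cons h p =>
      have := hNu _ h
      rw [hSxy] at this
      rcases Finset.mem_insert.mp this with rfl | h2
      · exact Or.inl h
      · rw [Finset.mem_singleton] at h2
        subst h2
        exact Or.inr h
  -- it suffices to find a rerouting vertex r for T
  have suff : ∀ r : V, r ∉ T → (∀ a ∈ S, a ≠ r → G.Adj u a → G.Adj r a) → False := by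
    intro r hrT Hred
    apply hT.2.1
    apply reroute hG.preconnected (↑T) r (by simpa using hrT)
    intro s hsT a haT har hadj
    rw [Finset.mem_coe] at hsT
    have haT' : a ∉ T := by simpa using haT
    have huadj : G.Adj u a := by
      rw [hTuv] at hsT
      rcases Finset.mem_insert.mp hsT with rfl | hs'
      · exact hadj
      · rw [Finset.mem_singleton] at hs'
        subst hs'
        exact (hT.2.2 u huT s hvT a haT').mpr hadj
    have haS : a ∈ S := hNu a huadj
    exact Hred a haS har huadj
  by_cases hadjux : G.Adj u x <;> by_cases hadjuy : G.Adj u y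
  · -- u adjacent to both x and y
    by_cases hadjxy : G.Adj x y
    · apply suff x hxT
      intro a ha har hua
      rw [hSxy] at ha
      rcases Finset.mem_insert.mp ha with rfl | ha'
      · exact absurd rfl har
      · rw [Finset.mem_singleton] at ha'
        subst ha'
        exact hadjxy
    · by_cases hw : ∃ w, G.Adj x w ∧ w ∉ S ∧ w ∉ T
      · obtain ⟨w, hwx, hwS, hwT⟩ := hw
        apply suff w hwT
        intro a ha _ hua
        rw [hSxy] at ha
        rcases Finset.mem_insert.mp ha with rfl | ha'
        · exact hwx.symm
        · rw [Finset.mem_singleton] at ha'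
          subst ha'
          exact ((hS.2.2 x hxS a hyS w hwS).mp hwx).symm
      · push_neg at hw
        have hNx : ∀ w, G.Adj x w → w = u ∨ w = v := by
          intro w hxw
          by_cases hwS : w ∈ S
          · exfalso
            rw [hSxy] at hwS
            rcases Finset.mem_insert.mp hwS with rfl | h2
            · exact G.loopless.irrefl w hxw
            · rw [Finset.mem_singleton] at h2
              subst h2
              exact hadjxy hxw
          · have hwT := hw w hxw hwS
            rw [hTuv, Finset.mem_insert, Finset.mem_singleton] at hwT
            exact hwT
        have hNy : ∀ w, G.Adj y w → w = u ∨ w = v := by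
          intro w hyw
          by_cases hwS : w ∈ S
          · exfalso
            rw [hSxy] at hwS
            rcases Finset.mem_insert.mp hwS with rfl | h2
            · exact hadjxy hyw.symm
            · rw [Finset.mem_singleton] at h2
              subst h2
              exact G.loopless.irrefl w hyw
          · exact hNx w ((hS.2.2 x hxS y hyS w hwS).mpr hyw)
        have hNu' : ∀ w, G.Adj u w → w = x ∨ w = y := by
          intro w hw'
          have := hNu w hw'
          rw [hSxy] at this
          rcases Finset.mem_insert.mp this with rfl | h2
          · exact Or.inl rfl
          · rw [Finset.mem_singleton] at h2
            exact Or.inr h2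
        have hNv' : ∀ w, G.Adj v w → w = x ∨ w = y := by
          intro w hw'
          have := hNv w hw'
          rw [hSxy] at this
          rcases Finset.mem_insert.mp this with rfl | h2
          · exact Or.inl rfl
          · rw [Finset.mem_singleton] at h2
            exact Or.inr h2
        have hC : ∀ a ∈ ({x, y, u, v} : Set V), ∀ b, G.Adj a b → b ∈ ({x, y, u, v} : Set V) := by
          intro a ha b hab
          simp only [Set.mem_insert_iff, Set.mem_singleton_iff] at ha ⊢
          rcases ha with rfl | rfl | rfl | rfl
          · rcases hNx b hab with rfl | rfl <;> tauto
          · rcases hNy b hab with rfl | rfl <;> tauto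
          · rcases hNu' b hab with rfl | rfl <;> tauto
          · rcases hNv' b hab with rfl | rfl <;> tauto
        have hall : ∀ w : V, w = x ∨ w = y ∨ w = u ∨ w = v := by
          intro w
          obtain ⟨p⟩ := hG.preconnected x w
          have := walk_closure hC p (by simp)
          simpa using this
        have hvx : v ≠ x := fun h => hvS (h ▸ hxS)
        have hvy : v ≠ y := fun h => hvS (h ▸ hyS)
        have huy : u ≠ y := fun h => huS (h ▸ hyS)
        exact (c4_iso hxy hux.symm hvx.symm huy.symm hvy.symm huv hall
          hadjux.symm ((hT.2.2 u huT v hvT x hxT).mp hadjux).symm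
          hadjuy.symm ((hT.2.2 u huT v hvT y hyT).mp hadjuy).symm
          hadjxy hnadj).elim h4.false
  · -- u ~ x only
    by_cases hw : ∃ w, G.Adj x w ∧ w ∉ T
    · obtain ⟨w, hwx, hwT⟩ := hw
      apply suff w hwT
      intro a ha _ hua
      rw [hSxy] at ha
      rcases Finset.mem_insert.mp ha with rfl | ha'
      · exact hwx.symm
      · rw [Finset.mem_singleton] at ha'
        subst ha'
        exact absurd hua hadjuy
    · push_neg at hw
      have hC : ∀ a ∈ ({x, u, v} : Set V), ∀ b, G.Adj a b → b ∈ ({x, u, v} : Set V) := by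
        intro a ha b hab
        simp only [Set.mem_insert_iff, Set.mem_singleton_iff] at ha ⊢
        rcases ha with rfl | rfl | rfl
        · have := hw b hab
          rw [hTuv, Finset.mem_insert, Finset.mem_singleton] at this
          tauto
        · have := hNu b hab
          rw [hSxy] at this
          rcases Finset.mem_insert.mp this with rfl | h2
          · tauto
          · rw [Finset.mem_singleton] at h2
            subst h2
            exact absurd hab hadjuy
        · have := hNv b hab
          rw [hSxy] at this
          rcases Finset.mem_insert.mp this with rfl | h2
          · tauto
          · rw [Finset.mem_singleton] at h2
            subst h2
            exact absurd ((hT.2.2 u huT a hvT b hyT).mpr hab) hadjuy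
      have hyC := walk_closure hC (Classical.choice (hG.preconnected x y)) (by simp)
      simp only [Set.mem_insert_iff, Set.mem_singleton_iff] at hyC
      rcases hyC with rfl | rfl | rfl
      · exact hxy rfl
      · exact huS hyS
      · exact hvS hyS
  · -- u ~ y only
    by_cases hw : ∃ w, G.Adj y w ∧ w ∉ T
    · obtain ⟨w, hwy, hwT⟩ := hw
      apply suff w hwT
      intro a ha _ hua
      rw [hSxy] at ha
      rcases Finset.mem_insert.mp ha with rfl | ha'
      · exact absurd hua hadjux
      · rw [Finset.mem_singleton] at ha'
        subst ha'
        exact hwy.symm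
    · push_neg at hw
      have hC : ∀ a ∈ ({y, u, v} : Set V), ∀ b, G.Adj a b → b ∈ ({y, u, v} : Set V) := by
        intro a ha b hab
        simp only [Set.mem_insert_iff, Set.mem_singleton_iff] at ha ⊢
        rcases ha with rfl | rfl | rfl
        · have := hw b hab
          rw [hTuv, Finset.mem_insert, Finset.mem_singleton] at this
          tauto
        · have := hNu b hab
          rw [hSxy] at this
          rcases Finset.mem_insert.mp this with rfl | h2
          · exact absurd hab hadjux
          · rw [Finset.mem_singleton] at h2
            subst h2
            tauto
        · have := hNv b hab
          rw [hSxy] at this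
          rcases Finset.mem_insert.mp this with rfl | h2
          · exact absurd ((hT.2.2 u huT a hvT b hxT).mpr hab) hadjux
          · rw [Finset.mem_singleton] at h2
            subst h2
            tauto
      have hxC := walk_closure hC (Classical.choice (hG.preconnected y x)) (by simp)
      simp only [Set.mem_insert_iff, Set.mem_singleton_iff] at hxC
      rcases hxC with rfl | rfl | rfl
      · exact hxy rfl
      · exact huS hxS
      · exact hvS hxS
  · exact absurd hux_or (not_or.mpr ⟨hadjux, hadjuy⟩)

end Aux


section Aux2

open Finset SimpleGraph

variable [Fintype V] [DecidableEq V] {G : SimpleGraph V} {S T A B : Finset V} {k : ℕ}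

lemma compDist_symmDiff_other (hG : G.Connected)
    (h4 : IsEmpty (G ≃g SimpleGraph.cycleGraph 4))
    (hS : SameNbrCut G S) (hT : SameNbrCut G T) (hne : S ≠ T) (hk : 1 ≤ k)
    (hA : A.card = k) (ht : compDist G T A ∈ TS G T k) :
    compDist G S (A ∆ T) = compDist G S A := by
  have hdisT := cuts_disjoint hG hT hS (Ne.symm hne)
  have h1 : (A ∩ T).card = 1 := inter_card_one hk hA ht
  obtain ⟨w, hw⟩ := Finset.card_eq_one.mp h1
  have hwAT : w ∈ A ∧ w ∈ T := Finset.mem_inter.mp (hw ▸ Finset.mem_singleton_self w)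
  obtain ⟨w', hww', hTw⟩ := cut_pair hT.1 hwAT.2
  have hw'T : w' ∈ T := by rw [hTw]; simp
  have hw'A : w' ∉ A := by
    intro h
    have h2 : w' ∈ A ∩ T := Finset.mem_inter.mpr ⟨h, hw'T⟩
    rw [hw, Finset.mem_singleton] at h2
    exact hww' h2.symm
  refine (compDist_swap (hdisT w hwAT.2) (hdisT w' hw'T) hww'
    (cuts_same_comp hG h4 hS hT hne hwAT.2 hw'T
      (hdisT w hwAT.2) (hdisT w' hw'T)) ?_ ?_ ?_).symm
  · intro z _ hzw hzw'
    have hzT : z ∉ T := by rw [hTw]; simp [hzw, hzw']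
    simp [Finset.mem_symmDiff, hzT]
  · simp [Finset.mem_symmDiff, hw'A, hw'T, hwAT.1]
  · simp [Finset.mem_symmDiff, hw'A, hwAT.1, hwAT.2]

lemma phi_comm (hG : G.Connected) (h4 : IsEmpty (G ≃g SimpleGraph.cycleGraph 4))
    (hS : SameNbrCut G S) (hT : SameNbrCut G T) (hne : S ≠ T)
    {αS : Set (delComp G S → ℕ)} {αT : Set (delComp G T → ℕ)}
    (hαS : αS ⊆ TS G S k) (hαT : αT ⊆ TS G T k) (hk : 1 ≤ k) (hA : A.card = k) :
    phiFun G S αS (phiFun G T αT A) = phiFun G T αT (phiFun G S αS A) := by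
  by_cases hQ : compDist G T A ∈ αT <;> by_cases hP : compDist G S A ∈ αS
  · have e1 : compDist G S (A ∆ T) = compDist G S A :=
      compDist_symmDiff_other hG h4 hS hT hne hk hA (hαT hQ)
    have e2 : compDist G T (A ∆ S) = compDist G T A :=
      compDist_symmDiff_other hG h4 hT hS (Ne.symm hne) hk hA (hαS hP)
    have L1 : phiFun G T αT A = A ∆ T := by rw [phiFun, if_pos hQ, tokenMove_eq]
    have L2 : phiFun G S αS A = A ∆ S := by rw [phiFun, if_pos hP, tokenMove_eq]
    rw [L1, L2, phiFun, phiFun, tokenMove_eq, tokenMove_eq, e1, e2, if_pos hP,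
      if_pos hQ, symmDiff_right_comm]
  · have e1 : compDist G S (A ∆ T) = compDist G S A :=
      compDist_symmDiff_other hG h4 hS hT hne hk hA (hαT hQ)
    have L1 : phiFun G T αT A = A ∆ T := by rw [phiFun, if_pos hQ, tokenMove_eq]
    have L2 : phiFun G S αS A = A := by rw [phiFun, if_neg hP]
    rw [L1, L2, L1, phiFun, tokenMove_eq, e1, if_neg hP]
  · have e2 : compDist G T (A ∆ S) = compDist G T A :=
      compDist_symmDiff_other hG h4 hT hS (Ne.symm hne) hk hA (hαS hP)
    have L1 : phiFun G T αT A = A := by rw [phiFun, if_neg hQ]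
    have L2 : phiFun G S αS A = A ∆ S := by rw [phiFun, if_pos hP, tokenMove_eq]
    rw [L1, L2, phiFun, tokenMove_eq, e2, if_neg hQ]
  · have L1 : phiFun G T αT A = A := by rw [phiFun, if_neg hQ]
    have L2 : phiFun G S αS A = A := by rw [phiFun, if_neg hP]
    rw [L1, L2, L1]

end Aux2

/-- Corollary 2 and equation (3): `ψ_β` is an automorphism of
`F_k(G)` and its factors `φ_{Sᵢ,βᵢ}` pairwise commute. -/
theorem psi_is_automorphism [Fintype V] [DecidableEq V] (G : SimpleGraph V)
    (hG : G.Connected) (h4 : IsEmpty (G ≃g SimpleGraph.cycleGraph 4))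
    (k : ℕ) (hk1 : 1 ≤ k) (hk2 : k ≤ Fintype.card V - 1)
    (q : ℕ) (S : Fin q → Finset V) (hinj : Function.Injective S)
    (hcut : ∀ i, SameNbrCut G (S i))
    (hall : ∀ T : Finset V, SameNbrCut G T → ∃ i, T = S i)
    (β : ∀ i, Set (delComp G (S i) → ℕ)) (hβ : ∀ i, β i ⊆ TS G (S i) k) :
    (∃ e : tokenGraph G k ≃g tokenGraph G k,
        ∀ A : {A : Finset V // A.card = k},
          ((e A : {B : Finset V // B.card = k}) : Finset V) = psiFun G S β (↑A : Finset V)) ∧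
      ∀ (i j : Fin q) (A : Finset V), A.card = k →
        phiFun G (S i) (β i) (phiFun G (S j) (β j) A)
          = phiFun G (S j) (β j) (phiFun G (S i) (β i) A) := by
  classical
  constructor
  · have hφcard : ∀ (i : Fin q) (A : Finset V), A.card = k →
        (phiFun G (S i) (β i) A).card = k :=
      fun i A hA => phiFun_card (hcut i).1 (hβ i) hk1 hA
    have hφadj : ∀ (i : Fin q) (A B : {A : Finset V // A.card = k}),
        (tokenGraph G k).Adj A B → (tokenGraph G k).Adj
          ⟨phiFun G (S i) (β i) A.1, hφcard i A.1 A.2⟩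
          ⟨phiFun G (S i) (β i) B.1, hφcard i B.1 B.2⟩ := by
      intro i A B h
      exact phi_adj (hcut i) (A.2.trans B.2.symm) h
    let F : Fin q → (tokenGraph G k ≃g tokenGraph G k) := fun i =>
      { toFun := fun A => ⟨phiFun G (S i) (β i) A.1, hφcard i A.1 A.2⟩
        invFun := fun A => ⟨phiFun G (S i) (β i) A.1, hφcard i A.1 A.2⟩
        left_inv := fun A => Subtype.ext (phiFun_invol A.1)
        right_inv := fun A => Subtype.ext (phiFun_invol A.1)
        map_rel_iff' := by
          intro A B
          constructor
          · intro h
            have h2 := phi_adj (α := β i) (A := phiFun G (S i) (β i) A.1)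
              (B := phiFun G (S i) (β i) B.1) (hcut i)
              ((hφcard i A.1 A.2).trans (hφcard i B.1 B.2).symm) h
            rw [phiFun_invol, phiFun_invol] at h2
            exact h2
          · intro h
            exact phi_adj (α := β i) (hcut i) (A.2.trans B.2.symm) h }
    refine ⟨((List.finRange q).map F).foldr (fun f g => g.trans f) (RelIso.refl _), ?_⟩
    have heval : ∀ (l : List (Fin q)) (A : {A : Finset V // A.card = k}),
        ((((l.map F).foldr (fun f g => g.trans f) (RelIso.refl _)) A :
            {A : Finset V // A.card = k}) : Finset V)
          = (l.map (fun i => phiFun G (S i) (β i))).foldr (· ∘ ·) id (A : Finset V) := by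
      intro l
      induction l with
      | nil => intro A; rfl
      | cons i l ih =>
        intro A
        have h1 : ((((i :: l).map F).foldr (fun f g => g.trans f) (RelIso.refl _) A :
              {A : Finset V // A.card = k}) : Finset V)
            = phiFun G (S i) (β i)
              (((l.map F).foldr (fun f g => g.trans f) (RelIso.refl _) A :
                {A : Finset V // A.card = k}) : Finset V) := rfl
        rw [h1, ih A]
        rfl
    intro A
    rw [heval (List.finRange q) A, psiFun, List.ofFn_eq_map]
  · intro i j A hA
    by_cases hij : i = j
    · subst hij; rfl
    · exact phi_comm hG h4 (hcut i) (hcut j) (fun h => hij (hinj h)) (hβ i) (hβ j) hk1 hA
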